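/- Let n ≥ 2 be an integer, let f : [0,∞) → ℝ be continuous with f ≥ 0 and f(u) > 0 for u > 0, and let γ > 0. Then there is no function y ∈ C¹(ℝ) such that y(t) > 0 for all t ∈ ℝ, the map t ↦ |y'(t)|^{n−2}·y'(t) is differentiable on ℝ with −(|y'|^{n−2}·y')'(t) = f(y(t))·e^{−t} for all t ∈ ℝ, lim_{t→∞} y(t) = γ and lim_{t→∞} y'(t) = 0. In other words, every solution of this equation with these conditions at +∞ must have a finite first zero. -/

import Mathlib

/-- Lemma 2.1 (finiteness of the first zero): there is no globally positive solution of
`-(|y'|^{n-2} y')' = f(y) e^{-t}` on all of `ℝ` with `y(∞) = γ`, `y'(∞) = 0`. -/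
theorem no_global_positive_solution
    (n : ℕ) (hn : 2 ≤ n)
    (f : ℝ → ℝ) (hfc : ContinuousOn f (Set.Ici 0))
    (hf0 : ∀ u, 0 ≤ u → 0 ≤ f u) (hfpos : ∀ u, 0 < u → 0 < f u)
    (γ : ℝ) (hγ : 0 < γ) :
    ¬ ∃ y : ℝ → ℝ,
      ContDiff ℝ 1 y ∧
      (∀ t : ℝ, 0 < y t) ∧
      (∀ t : ℝ, HasDerivAt (fun s : ℝ => |deriv y s| ^ (n - 2) * deriv y s)
        (-(f (y t) * Real.exp (-t))) t) ∧
      Filter.Tendsto y Filter.atTop (nhds γ) ∧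
      Filter.Tendsto (deriv y) Filter.atTop (nhds 0) := by
  rintro ⟨y, hy, hpos, hode, -, hd0⟩
  set w : ℝ → ℝ := fun s : ℝ => |deriv y s| ^ (n - 2) * deriv y s with hwdef
  -- `w` is strictly decreasing
  have hwanti : StrictAnti w := by
    refine strictAnti_of_hasDerivAt_neg hode fun t => ?_
    have : 0 < f (y t) * Real.exp (-t) :=
      mul_pos (hfpos _ (hpos t)) (Real.exp_pos _)
    linarith
  -- `w` tends to `0` at infinity
  have hw0 : Filter.Tendsto w Filter.atTop (nhds 0) := by
    have hg : Continuous fun u : ℝ => |u| ^ (n - 2) * u :=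
      (continuous_abs.pow _).mul continuous_id
    have := (hg.tendsto 0).comp hd0
    simp at this
    exact this
  -- `w` is nonnegative, hence positive everywhere
  have hwnonneg : ∀ t, 0 ≤ w t := by
    intro t
    refine le_of_tendsto hw0 ?_
    filter_upwards [Filter.eventually_ge_atTop t] with s hs
    exact hwanti.antitone hs
  have hwpos : ∀ t, 0 < w t := fun t =>
    lt_of_le_of_lt (hwnonneg (t + 1)) (hwanti (by linarith))
  -- hence the derivative of `y` is positive everywhere
  have hdpos : ∀ t, 0 < deriv y t := by
    intro t
    by_contra h
    push_neg at h
    have : w t ≤ 0 := mul_nonpos_of_nonneg_of_nonpos (pow_nonneg (abs_nonneg _) _) h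
    exact absurd (hwpos t) (not_lt.mpr this)
  -- on positives, `w t = (deriv y t) ^ (n-1)`
  have hwpow : ∀ t, w t = deriv y t ^ (n - 1) := by
    intro t
    have h1 : |deriv y t| = deriv y t := abs_of_pos (hdpos t)
    have h2 : n - 1 = n - 2 + 1 := by omega
    rw [hwdef]
    simp only [h1, h2, pow_succ]
  -- deriv y is ≥ deriv y 0 on negatives
  have hmono : ∀ s : ℝ, s < 0 → deriv y 0 ≤ deriv y s := by
    intro s hs
    by_contra h
    push_neg at h
    have : w s < w 0 := by
      rw [hwpow s, hwpow 0]
      exact pow_lt_pow_left₀ h (hdpos s).le (by omega)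
    exact lt_asymm this (hwanti hs)
  -- mean value theorem to get a contradiction
  set t : ℝ := -(y 0 / deriv y 0) - 1 with htdef
  have hq : 0 < y 0 / deriv y 0 := div_pos (hpos 0) (hdpos 0)
  have ht : t < 0 := by rw [htdef]; linarith
  have hdy : ∀ x : ℝ, HasDerivAt y (deriv y x) x := fun x =>
    ((hy.differentiable one_ne_zero) x).hasDerivAt
  obtain ⟨c, hc, hslope⟩ := exists_hasDerivAt_eq_slope y (deriv y) ht
    ((hy.continuous).continuousOn) (fun x _ => hdy x)
  have hc0 : c < 0 := hc.2
  have hge : deriv y 0 ≤ (y 0 - y t) / (0 - t) := hslope ▸ hmono c hc0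
  have hden : (0 : ℝ) < 0 - t := by linarith
  have h1 : deriv y 0 * (0 - t) ≤ y 0 - y t := by
    rw [le_div_iff₀ hden] at hge
    linarith [hge]
  have h2 : deriv y 0 * (0 - t) = y 0 + deriv y 0 := by
    have h0 : deriv y 0 ≠ 0 := (hdpos 0).ne'
    rw [htdef]
    field_simp
    ring
  have := hpos t
  nlinarith [h1, h2, hdpos 0]
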